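/- Let α > 2, ρ_p > 0, and ν ∈ (0,1] be fixed real numbers and set ρ = ν·ρ_p. For each c > 1/ν let β_c be the unique positive solution of 1 = (2πρβ/α) · ∫_{(π ρ_p/c)^{α/2}}^{∞} τ^{-2/α} / (1 + τβ) dτ. Then lim_{c→∞} β_c = [ (α/(2π²ρ)) · sin(2π/α) ]^{α/2}. -/

import Mathlib

open MeasureTheory Set Real Filter

namespace Stmt2Aux



lemma measurable_g (s : ℝ) : Measurable (fun u : ℝ => u ^ (s - 1) / (1 + u)) :=
  (measurable_id.pow_const _).div (measurable_const.add measurable_id)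

lemma int_g {s : ℝ} (hs0 : 0 < s) (hs1 : s < 1) :
    IntegrableOn (fun u : ℝ => u ^ (s - 1) / (1 + u)) (Ioi (0:ℝ)) := by
  have h1 : IntegrableOn (fun u : ℝ => u ^ (s - 1) / (1 + u)) (Ioc (0:ℝ) 1) := by
    have hb : IntegrableOn (fun u : ℝ => u ^ (s - 1)) (Ioc (0:ℝ) 1) :=
      (intervalIntegral.intervalIntegrable_rpow' (by linarith : (-1:ℝ) < s - 1)).1
    refine MeasureTheory.Integrable.mono hb ((measurable_g s).aestronglyMeasurable) ?_
    filter_upwards [ae_restrict_mem measurableSet_Ioc] with u hu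
    have hu0 : 0 < u := hu.1
    rw [Real.norm_eq_abs, Real.norm_eq_abs, abs_of_nonneg (Real.rpow_nonneg hu0.le _),
      abs_of_nonneg (div_nonneg (Real.rpow_nonneg hu0.le _) (by linarith))]
    exact div_le_self (Real.rpow_nonneg hu0.le _) (by linarith)
  have h2 : IntegrableOn (fun u : ℝ => u ^ (s - 1) / (1 + u)) (Ioi (1:ℝ)) := by
    have hb : IntegrableOn (fun u : ℝ => u ^ (s - 2)) (Ioi (1:ℝ)) :=
      integrableOn_Ioi_rpow_of_lt (by linarith) one_pos
    refine MeasureTheory.Integrable.mono hb ((measurable_g s).aestronglyMeasurable) ?_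
    filter_upwards [ae_restrict_mem measurableSet_Ioi] with u hu
    have hu1 : (1:ℝ) < u := hu
    have hu0 : 0 < u := by linarith
    rw [Real.norm_eq_abs, Real.norm_eq_abs, abs_of_nonneg (Real.rpow_nonneg hu0.le _),
      abs_of_nonneg (div_nonneg (Real.rpow_nonneg hu0.le _) (by linarith))]
    rw [div_le_iff₀ (by linarith : (0:ℝ) < 1 + u)]
    calc u ^ (s - 1) = u ^ (s-2) * u := by
          rw [← Real.rpow_add_one hu0.ne' (s-2)]; ring_nf
      _ ≤ u ^ (s-2) * (1 + u) := by
          exact mul_le_mul_of_nonneg_left (by linarith) (Real.rpow_nonneg hu0.le _)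
  have : Ioc (0:ℝ) 1 ∪ Ioi 1 = Ioi 0 := Ioc_union_Ioi_eq_Ioi zero_le_one
  rw [← this]; exact h1.union h2




-- complex beta value
lemma beta_complex {s : ℝ} (hs0 : 0 < s) (hs1 : s < 1) :
    Complex.betaIntegral s (1 - s) = ((π / Real.sin (π * s) : ℝ) : ℂ) := by
  have h1 : Complex.Gamma s * Complex.Gamma (1 - s) =
      Complex.Gamma ((s:ℂ) + (1 - s)) * Complex.betaIntegral s (1 - s) :=
    Complex.Gamma_mul_Gamma_eq_betaIntegral (by simpa using hs0)
      (by simp [Complex.sub_re]; simpa using hs1)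
  have h2 : Complex.Gamma s * Complex.Gamma (1 - s) = ↑π / Complex.sin (↑π * s) :=
    Complex.Gamma_mul_Gamma_one_sub s
  rw [h2] at h1
  have h3 : ((s:ℂ) + (1 - s)) = 1 := by ring
  rw [h3, Complex.Gamma_one, one_mul] at h1
  rw [← h1]
  push_cast [Complex.ofReal_sin]
  norm_num

lemma beta_real {s : ℝ} (hs0 : 0 < s) (hs1 : s < 1) :
    ∫ x in (0:ℝ)..1, x ^ (s - 1) * (1 - x) ^ (-s) = π / Real.sin (π * s) := by
  have key : Complex.betaIntegral s (1 - s) =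
      ((∫ x in (0:ℝ)..1, x ^ (s - 1) * (1 - x) ^ (-s) : ℝ) : ℂ) := by
    rw [Complex.betaIntegral, ← intervalIntegral.integral_ofReal]
    refine intervalIntegral.integral_congr fun x hx => ?_
    rw [uIcc_of_le zero_le_one] at hx
    have hx0 : (0:ℝ) ≤ x := hx.1
    have hx1 : (0:ℝ) ≤ 1 - x := by linarith [hx.2]
    have e1 : ((s:ℂ) - 1) = ((s - 1 : ℝ) : ℂ) := by push_cast; ring
    have e2 : (1 - (s:ℂ) - 1) = ((-s : ℝ) : ℂ) := by push_cast; ring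
    have e3 : (1 - (x:ℂ)) = ((1 - x : ℝ) : ℂ) := by push_cast; ring
    rw [e1, e2, e3, ← Complex.ofReal_cpow hx0, ← Complex.ofReal_cpow hx1,
      ← Complex.ofReal_mul]
  have := (beta_complex hs0 hs1).symm.trans key
  exact_mod_cast this.symm


lemma image_f : (fun x : ℝ => x / (1 - x)) '' Ioo 0 1 = Ioi (0:ℝ) := by
  ext u
  constructor
  · rintro ⟨x, ⟨hx0, hx1⟩, rfl⟩
    exact div_pos hx0 (by linarith)
  · intro hu
    have hu0 : (0:ℝ) < u := hu
    refine ⟨u / (1 + u), ⟨div_pos hu0 (by linarith), ?_⟩, ?_⟩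
    · rw [div_lt_one (by linarith)]; linarith
    · show u / (1 + u) / (1 - u / (1 + u)) = u
      have h1 : (1:ℝ) - u / (1 + u) = 1 / (1 + u) := by field_simp; ring
      rw [h1]; field_simp

lemma beta_val {s : ℝ} (hs0 : 0 < s) (hs1 : s < 1) :
    ∫ u in Ioi (0:ℝ), u ^ (s - 1) / (1 + u) = π / Real.sin (π * s) := by
  have hderiv : ∀ x ∈ Ioo (0:ℝ) 1, HasDerivWithinAt (fun x : ℝ => x / (1 - x))
      (((1 - x) ^ 2)⁻¹) (Ioo 0 1) x := by
    intro x hx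
    have hne : (1:ℝ) - x ≠ 0 := by have h2 := hx.2; intro h; linarith [sub_eq_zero.mp h]
    have h := (hasDerivAt_id x).div ((hasDerivAt_id x).const_sub 1) hne
    simp only [id] at h
    have he : (1 * (1 - x) - x * -1) / (1 - x) ^ 2 = ((1 - x) ^ 2)⁻¹ := by
      field_simp
      ring
    rw [he] at h
    exact h.hasDerivWithinAt
  have hinj : InjOn (fun x : ℝ => x / (1 - x)) (Ioo 0 1) := by
    intro x hx y hy h
    have hx1 : (1:ℝ) - x ≠ 0 := by have h2 := hx.2; intro hc; linarith [sub_eq_zero.mp hc]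
    have hy1 : (1:ℝ) - y ≠ 0 := by have h2 := hy.2; intro hc; linarith [sub_eq_zero.mp hc]
    field_simp at h
    linarith
  have himg := image_f
  have := integral_image_eq_integral_abs_deriv_smul measurableSet_Ioo hderiv hinj
    (fun u : ℝ => u ^ (s - 1) / (1 + u))
  rw [himg] at this
  rw [this]
  have heq : ∀ x ∈ Ioo (0:ℝ) 1, |((1 - x) ^ 2)⁻¹| •
      ((x / (1 - x)) ^ (s - 1) / (1 + x / (1 - x))) = x ^ (s - 1) * (1 - x) ^ (-s) := by
    intro x hx
    have hx0 : (0:ℝ) < x := hx.1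
    have hy : (0:ℝ) < 1 - x := by linarith [hx.2]
    have h1 : (1:ℝ) + x / (1 - x) = (1 - x)⁻¹ := by field_simp; ring
    rw [smul_eq_mul, abs_of_pos (by positivity), h1,
      Real.div_rpow hx0.le hy.le, div_inv_eq_mul]
    have h2 : ((1 - x) ^ 2)⁻¹ * (x ^ (s - 1) / (1 - x) ^ (s - 1) * (1 - x))
        = x ^ (s - 1) * ((1 - x) / ((1 - x) ^ 2 * (1 - x) ^ (s - 1))) := by
      field_simp
    rw [h2]
    congr 1
    rw [← Real.rpow_natCast (1 - x) 2, ← Real.rpow_add hy,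
      div_eq_iff (by positivity), ← Real.rpow_add hy]
    have he : -s + ((2:ℕ) + (s - 1)) = 1 := by push_cast; ring
    rw [he, Real.rpow_one]
  rw [setIntegral_congr_fun measurableSet_Ioo heq]
  rw [← integral_Ioc_eq_integral_Ioo, ← intervalIntegral.integral_of_le zero_le_one]
  exact beta_real hs0 hs1



lemma subst {s b a : ℝ} (hb : 0 < b) (ha : 0 < a) :
    ∫ τ in Ioi a, τ ^ (s - 1) / (1 + τ * b)
      = b ^ (-s) * ∫ u in Ioi (a * b), u ^ (s - 1) / (1 + u) := by
  have h := integral_comp_mul_right_Ioi (fun u : ℝ => u ^ (s - 1) / (1 + u)) a hb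
  have congr1 : ∀ τ ∈ Ioi a, τ ^ (s - 1) / (1 + τ * b)
      = b ^ (1 - s) * ((τ * b) ^ (s - 1) / (1 + τ * b)) := by
    intro τ hτ
    have hτ0 : 0 < τ := lt_trans ha hτ
    have hbb : b ^ (1 - s) * b ^ (s - 1) = 1 := by
      rw [← Real.rpow_add hb]; norm_num
    rw [Real.mul_rpow hτ0.le hb.le, ← mul_div_assoc, ← mul_assoc,
      mul_comm (b ^ (1 - s)) (τ ^ (s - 1)), mul_assoc, hbb, mul_one]
  rw [setIntegral_congr_fun measurableSet_Ioi congr1, MeasureTheory.integral_const_mul, h,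
    smul_eq_mul, ← mul_assoc]
  congr 1
  rw [← Real.rpow_neg_one b, ← Real.rpow_add hb]
  ring_nf


end Stmt2Aux

open Stmt2Aux in
/-- Let `α > 2`, `ρ_p > 0`, `ν ∈ (0,1]` and set `ρ = ν·ρ_p`.  For each
`c > 1/ν` let `β c` be the (unique) positive solution of
`1 = (2πρβ/α) · ∫_{(π ρ_p/c)^(α/2)}^{∞} τ^(-2/α)/(1 + τβ) dτ`.  Then
`β c → [(α/(2π²ρ)) · sin(2π/α)]^(α/2)` as `c → ∞`. -/
theorem stmt2 (α ρp ν : ℝ) (hα : 2 < α) (hρp : 0 < ρp) (hν : ν ∈ Ioc (0:ℝ) 1)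
    (ρ : ℝ) (hρ : ρ = ν * ρp) (β : ℝ → ℝ)
    (hβpos : ∀ c : ℝ, 1 / ν < c → 0 < β c)
    (hβeq : ∀ c : ℝ, 1 / ν < c →
      1 = (2 * π * ρ * β c / α) *
        ∫ τ in Ioi ((π * ρp / c) ^ (α / 2)), τ ^ (-2 / α) / (1 + τ * β c)) :
    Tendsto β atTop (nhds ((α / (2 * π ^ 2 * ρ) * Real.sin (2 * π / α)) ^ (α / 2))) := by
  have hα0 : (0:ℝ) < α := by linarith
  set q : ℝ := 2 / α with hqdef
  have hq0 : 0 < q := by positivity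
  have hq1 : q < 1 := by rw [hqdef, div_lt_one hα0]; linarith
  set s : ℝ := 1 - q with hsdef
  have hs0 : 0 < s := by rw [hsdef]; linarith
  have hs1 : s < 1 := by rw [hsdef]; linarith
  have hν0 : 0 < ν := hν.1
  have hρ0 : 0 < ρ := hρ ▸ mul_pos hν0 hρp
  have hπ : 0 < π := Real.pi_pos
  set G : ℝ → ℝ := fun t => ∫ u in Ioi t, u ^ (s - 1) / (1 + u) with hGdef
  set K : ℝ := α / (2 * π * ρ) with hKdef
  have hK0 : 0 < K := by rw [hKdef]; positivity
  set a : ℝ → ℝ := fun c => (π * ρp / c) ^ (α / 2) with hadef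
  -- integrability
  have hint : IntegrableOn (fun u : ℝ => u ^ (s-1)/(1+u)) (Ioi 0) := int_g hs0 hs1
  have hint' : ∀ t : ℝ, 0 ≤ t → IntegrableOn (fun u : ℝ => u ^ (s-1)/(1+u)) (Ioi t) :=
    fun t ht => hint.mono_set (Ioi_subset_Ioi ht)
  have hgnn : ∀ t : ℝ, 0 ≤ t →
      (0:ℝ→ℝ) ≤ᵐ[volume.restrict (Ioi t)] fun u : ℝ => u ^ (s-1)/(1+u) := by
    intro t ht
    filter_upwards [ae_restrict_mem measurableSet_Ioi] with u hu
    have hu0 : 0 < u := lt_of_le_of_lt ht hu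
    positivity
  have hGmono : ∀ t1 t2 : ℝ, 0 ≤ t1 → t1 ≤ t2 → G t2 ≤ G t1 := by
    intro t1 t2 h1 h12
    exact setIntegral_mono_set (hint' t1 h1) (hgnn t1 h1)
      (HasSubset.Subset.eventuallyLE (Ioi_subset_Ioi h12))
  have hG0 : G 0 = π / Real.sin (π * s) := beta_val hs0 hs1
  have hsin : 0 < Real.sin (π * s) := by
    apply Real.sin_pos_of_pos_of_lt_pi (by positivity)
    nlinarith
  have hG0pos : 0 < G 0 := hG0 ▸ div_pos hπ hsin
  have hG1pos : 0 < G 1 := by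
    rw [hGdef]
    rw [setIntegral_pos_iff_support_of_nonneg_ae (hgnn 1 zero_le_one) (hint' 1 zero_le_one)]
    have hsub : Ioi (1:ℝ) ⊆ Function.support (fun u : ℝ => u ^ (s-1)/(1+u)) ∩ Ioi 1 := by
      intro u hu
      have hu1 : (1:ℝ) < u := hu
      have hu0 : (0:ℝ) < u := by linarith
      exact ⟨ne_of_gt (by positivity), hu⟩
    refine lt_of_lt_of_le ?_ (measure_mono hsub)
    rw [Real.volume_Ioi]
    simp
  -- key identity
  have hKey : ∀ c : ℝ, 1/ν < c → (β c) ^ q * G (a c * β c) = K := by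
    intro c hc
    have hc0 : 0 < c := lt_trans (by positivity) hc
    have ha0 : 0 < a c := Real.rpow_pos_of_pos (by positivity) _
    have hb := hβpos c hc
    have h := hβeq c hc
    have hexp : -2 / α = s - 1 := by rw [hsdef, hqdef]; ring
    rw [hexp, subst hb ha0] at h
    have hpow : β c * (β c) ^ (-s) = (β c) ^ q := by
      nth_rewrite 1 [← Real.rpow_one (β c)]
      rw [← Real.rpow_add hb]
      congr 1
      rw [hsdef]; ring
    have h2 : K = (β c * (β c) ^ (-s)) * G (a c * β c) := by
      rw [hKdef]
      calc α / (2*π*ρ) = 1 * (α / (2*π*ρ)) := (one_mul _).symm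
        _ = (2 * π * ρ * β c / α * ((β c) ^ (-s) * G (a c * β c))) * (α/(2*π*ρ)) := by
            rw [← h]
        _ = (β c * (β c) ^ (-s)) * G (a c * β c) := by
            field_simp
    rw [hpow] at h2
    exact h2.symm
  -- a tends to zero
  have h_a : Tendsto a atTop (nhds 0) := by
    have h1 : Tendsto (fun c : ℝ => π * ρp / c) atTop (nhds 0) :=
      Tendsto.div_atTop tendsto_const_nhds tendsto_id
    have h2 := h1.rpow_const (p := α/2) (Or.inr (by positivity))
    rw [Real.zero_rpow (by positivity : (α/2:ℝ) ≠ 0)] at h2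
    exact h2
  have hE0 : ∀ᶠ c : ℝ in atTop, 1/ν < c := eventually_gt_atTop _
  have hEa : ∀ᶠ c : ℝ in atTop, 0 < a c := by
    filter_upwards [eventually_gt_atTop 0] with c hc
    exact Real.rpow_pos_of_pos (by positivity) _
  -- lower bound for G on [1,∞)
  have hGlow : ∀ t : ℝ, 1 ≤ t → (α/4) * t ^ (-q) ≤ G t := by
    intro t ht
    have ht0 : (0:ℝ) < t := lt_of_lt_of_le one_pos ht
    have hb : IntegrableOn (fun u : ℝ => u ^ (s-2) / 2) (Ioi t) :=
      (integrableOn_Ioi_rpow_of_lt (by linarith) ht0).div_const 2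
    have hmono : (∫ u in Ioi t, u ^ (s-2)/2) ≤ G t := by
      apply setIntegral_mono_on hb (hint' t (by linarith)) measurableSet_Ioi
      intro u hu
      have hu1 : (1:ℝ) ≤ u := le_trans ht (le_of_lt hu)
      have hu0 : (0:ℝ) < u := lt_of_lt_of_le one_pos hu1
      rw [div_le_div_iff₀ two_pos (by linarith : (0:ℝ) < 1 + u)]
      have e : u ^ (s-1) = u ^ (s-2) * u := by
        rw [← Real.rpow_add_one hu0.ne']; ring_nf
      have e2 : u ^ (s-2) ≤ u ^ (s-1) := Real.rpow_le_rpow_of_exponent_le hu1 (by linarith)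
      have e3 : (0:ℝ) ≤ u ^ (s-2) := Real.rpow_nonneg hu0.le _
      nlinarith
    have hval : (∫ u in Ioi t, u ^ (s-2)/2) = (α/4) * t ^ (-q) := by
      rw [integral_div, integral_Ioi_rpow_of_lt (by linarith) ht0]
      have he : s - 2 + 1 = -q := by rw [hsdef]; ring
      rw [he, hqdef]
      field_simp
      ring
    linarith
  -- eventually a c * β c < 1
  have hUB : ∀ᶠ c : ℝ in atTop, a c * β c < 1 := by
    set ε0 : ℝ := (α/(8*K)) ^ (α/2) with hε0def
    have hε0pos : 0 < ε0 := Real.rpow_pos_of_pos (by positivity) _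
    filter_upwards [hE0, hEa, h_a.eventually (eventually_lt_nhds hε0pos)] with c hc hac hεc
    by_contra hge
    push_neg at hge
    have hb := hβpos c hc
    have hk := hKey c hc
    have h1 : (α/4) * (a c * β c) ^ (-q) ≤ G (a c * β c) := hGlow _ hge
    have h2 : (β c)^q * ((α/4) * (a c * β c) ^ (-q)) ≤ (β c)^q * G (a c * β c) :=
      mul_le_mul_of_nonneg_left h1 (Real.rpow_nonneg hb.le q)
    rw [hk] at h2
    have hββ : (β c)^q * (β c)^(-q) = 1 := by rw [← Real.rpow_add hb]; norm_num
    have h3 : (β c)^q * ((α/4) * (a c * β c) ^ (-q)) = (α/4) * (a c) ^ (-q) := by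
      rw [Real.mul_rpow hac.le hb.le]
      linear_combination ((α/4) * (a c) ^ (-q)) * hββ
    rw [h3] at h2
    have h4 : (a c) ^ q < α/(8*K) := by
      have h5 := Real.rpow_lt_rpow hac.le hεc hq0
      rw [hε0def, ← Real.rpow_mul (by positivity : (0:ℝ) ≤ α/(8*K))] at h5
      have he : α/2 * q = 1 := by rw [hqdef]; field_simp
      rwa [he, Real.rpow_one] at h5
    have haq : 0 < (a c) ^ q := Real.rpow_pos_of_pos hac _
    have h5 : 8*K/α < (a c) ^ (-q) := by
      rw [Real.rpow_neg hac.le]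
      have := (inv_strictAnti₀ haq h4)
      rwa [inv_div] at this
    have h6 : (α/4) * (8*K/α) < (α/4) * (a c) ^ (-q) :=
      mul_lt_mul_of_pos_left h5 (by positivity)
    have h7 : (α/4) * (8*K/α) = 2*K := by field_simp; ring
    linarith
  -- eventual upper bound on β
  set M : ℝ := (K / G 1) ^ (α/2) with hMdef
  have hβq_ub : ∀ᶠ c : ℝ in atTop, β c ≤ M := by
    filter_upwards [hE0, hEa, hUB] with c hc hac hub
    have hb := hβpos c hc
    have ht0 : 0 < a c * β c := mul_pos hac hb
    have hG1le : G 1 ≤ G (a c * β c) := hGmono _ _ ht0.le hub.le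
    have h1 : (β c)^q * G 1 ≤ K := by
      rw [← hKey c hc]
      exact mul_le_mul_of_nonneg_left hG1le (Real.rpow_nonneg hb.le q)
    have h2 : (β c)^q ≤ K / G 1 := (le_div_iff₀ hG1pos).2 h1
    have h3 : ((β c)^q)^(α/2) = β c := by
      rw [← Real.rpow_mul hb.le]
      rw [show q * (α/2) = 1 by rw [hqdef]; field_simp]
      exact Real.rpow_one _
    calc β c = ((β c)^q)^(α/2) := h3.symm
      _ ≤ M := Real.rpow_le_rpow (Real.rpow_nonneg hb.le q) h2 (by positivity)
  -- a c * β c → 0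
  have htendab : Tendsto (fun c => a c * β c) atTop (nhds 0) := by
    have hup : Tendsto (fun c => a c * M) atTop (nhds 0) := by simpa using h_a.mul_const M
    refine tendsto_of_tendsto_of_tendsto_of_le_of_le' tendsto_const_nhds hup ?_ ?_
    · filter_upwards [hE0, hEa] with c hc hac
      exact (mul_pos hac (hβpos c hc)).le
    · filter_upwards [hEa, hβq_ub] with c hac hβM
      exact mul_le_mul_of_nonneg_left hβM hac.le
  -- G difference bound
  have hGdiff : ∀ t : ℝ, 0 < t → t ≤ 1 → G 0 - t ^ s / s ≤ G t := by
    intro t ht0 ht1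
    have hsplit : G 0 = (∫ u in Ioc 0 t, u ^ (s-1)/(1+u)) + G t := by
      rw [hGdef]
      rw [← setIntegral_union (Ioc_disjoint_Ioi le_rfl) measurableSet_Ioi
        (hint.mono_set Ioc_subset_Ioi_self) (hint' t ht0.le), Ioc_union_Ioi_eq_Ioi ht0.le]
    have h1 : (∫ u in Ioc 0 t, u ^ (s-1)/(1+u)) ≤ ∫ u in Ioc 0 t, u ^ (s-1) := by
      apply setIntegral_mono_on (hint.mono_set Ioc_subset_Ioi_self)
        ((intervalIntegral.intervalIntegrable_rpow' (by linarith : (-1:ℝ) < s-1)).1)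
        measurableSet_Ioc
      intro u hu
      exact div_le_self (Real.rpow_nonneg hu.1.le _) (by linarith [hu.1])
    have h2 : (∫ u in Ioc 0 t, u ^ (s-1)) = t ^ s / s := by
      rw [← intervalIntegral.integral_of_le ht0.le,
        integral_rpow (Or.inl (by linarith : (-1:ℝ) < s-1))]
      rw [Real.zero_rpow (by intro hh; rw [show s - 1 + 1 = s by ring] at hh; exact hs0.ne' hh)]
      rw [show s - 1 + 1 = s by ring]
      ring
    linarith
  -- G (a c β c) → G 0
  have hGtend : Tendsto (fun c => G (a c * β c)) atTop (nhds (G 0)) := by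
    have h1 : Tendsto (fun c => (a c * β c) ^ s) atTop (nhds 0) := by
      have := htendab.rpow_const (p := s) (Or.inr hs0.le)
      rwa [Real.zero_rpow hs0.ne'] at this
    have hlow : Tendsto (fun c => G 0 - (a c * β c) ^ s / s) atTop (nhds (G 0)) := by
      have := (tendsto_const_nhds (x := G 0) (f := atTop)).sub (h1.div_const s)
      simpa using this
    refine tendsto_of_tendsto_of_tendsto_of_le_of_le' hlow tendsto_const_nhds ?_ ?_
    · filter_upwards [hE0, hEa, hUB] with c hc hac hub
      exact hGdiff _ (mul_pos hac (hβpos c hc)) hub.le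
    · filter_upwards [hE0, hEa] with c hc hac
      exact hGmono 0 _ le_rfl (mul_pos hac (hβpos c hc)).le
  -- finish
  set L : ℝ := K / G 0 with hLdef
  have hL0 : 0 < L := div_pos hK0 hG0pos
  have hq_tend : Tendsto (fun c => (β c) ^ q) atTop (nhds L) := by
    have h1 : Tendsto (fun c => K / G (a c * β c)) atTop (nhds L) :=
      tendsto_const_nhds.div hGtend hG0pos.ne'
    refine Tendsto.congr' ?_ h1
    filter_upwards [hE0, hEa, hUB] with c hc hac hub
    have hb := hβpos c hc
    have hGpos : 0 < G (a c * β c) :=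
      lt_of_lt_of_le hG1pos (hGmono _ 1 (mul_pos hac hb).le hub.le)
    rw [← hKey c hc]
    field_simp
  have hfin : Tendsto β atTop (nhds (L ^ (α/2))) := by
    have hcont : ContinuousAt (fun x : ℝ => x ^ (α/2)) L :=
      Real.continuousAt_rpow_const L (α/2) (Or.inl hL0.ne')
    have h2 := hcont.tendsto.comp hq_tend
    refine Tendsto.congr' ?_ h2
    filter_upwards [hE0] with c hc
    have hb := hβpos c hc
    show ((β c)^q)^(α/2) = β c
    rw [← Real.rpow_mul hb.le, show q * (α/2) = 1 by rw [hqdef]; field_simp]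
    exact Real.rpow_one _
  have hLval : L ^ (α/2) = (α / (2 * π ^ 2 * ρ) * Real.sin (2 * π / α)) ^ (α/2) := by
    congr 1
    rw [hLdef, hG0, hKdef]
    have hsin2 : Real.sin (π * s) = Real.sin (2 * π / α) := by
      rw [hsdef, hqdef, show π * (1 - 2/α) = π - 2*π/α by ring, Real.sin_pi_sub]
    rw [hsin2]
    have hs2 : Real.sin (2 * π / α) ≠ 0 := by rw [← hsin2]; exact hsin.ne'
    field_simp [hs2]
  exact hLval ▸ hfin
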